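/- For every k ∈ ℕ, the class of graphs representable by k-local words is hereditary: if G is represented by a k-local word w, then for every subset U of V(G), the word π_U(w) is k-local and represents G|_U. -/

import Mathlib

open List

variable {α : Type*} [DecidableEq α]

/-- Two distinct letters `a` and `b` alternate in the word `w`:
their projection is an alternating sequence of `a`s and `b`s, both occurring. -/
def Alt (w : List α) (a b : α) : Prop :=
  a ≠ b ∧ a ∈ w ∧ b ∈ w ∧
    (w.filter (fun x => decide (x = a ∨ x = b))).Chain' (· ≠ ·)

/-- The word `w` represents the graph `G` with vertex set `V`:
the alphabet of `w` is `V` and adjacency coincides with alternation. -/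
def Represents (w : List α) (V : Finset α) (G : SimpleGraph α) : Prop :=
  w.toFinset = V ∧ ∀ a b : α, G.Adj a b ↔ Alt w a b

/-- A word is `k`-uniform if every letter of its alphabet occurs exactly `k` times. -/
def KUniform (k : ℕ) (w : List α) : Prop :=
  ∀ a ∈ w, w.count a = k

/-- Number of maximal blocks of `true`s in a boolean word. -/
def blockCount (l : List Bool) : ℕ :=
  ((l.zip (false :: l)).filter (fun p => p.1 && !p.2)).length

/-- `w` is `k`-local witnessed by the marking sequence `σ`. -/
def KLocalWith (k : ℕ) (w σ : List α) : Prop :=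
  σ.Nodup ∧ σ.toFinset = w.toFinset ∧
    ∀ i : ℕ, blockCount (w.map (fun x => decide (x ∈ σ.take i))) ≤ k

/-- `w` is `k`-local: some marking sequence witnesses `k`-locality. -/
def KLocal (k : ℕ) (w : List α) : Prop := ∃ σ : List α, KLocalWith k w σ

/-- The subgraph of `G` induced by `U` (as a graph on the same ambient type). -/
def inducedOn (G : SimpleGraph α) (U : Finset α) : SimpleGraph α where
  Adj a b := G.Adj a b ∧ a ∈ U ∧ b ∈ U
  symm := by
    constructor
    intro a b h
    exact ⟨h.1.symm, h.2.2, h.2.1⟩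
  loopless := by
    constructor
    intro a h
    exact G.loopless.irrefl a h.1

/-- Add a vertex `v` dominating the vertex set `V` to the graph `G`. -/
def addDom (G : SimpleGraph α) (V : Finset α) (v : α) : SimpleGraph α where
  Adj a b := G.Adj a b ∨ (a = v ∧ b ∈ V ∧ b ≠ v) ∨ (b = v ∧ a ∈ V ∧ a ≠ v)
  symm := by
    constructor
    intro a b h
    rcases h with h | h | h
    · exact Or.inl h.symm
    · exact Or.inr (Or.inr h)
    · exact Or.inr (Or.inl h)
  loopless := by
    constructor
    intro a h
    rcases h with h | h | h
    · exact G.loopless.irrefl a h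
    · exact h.2.2 h.1
    · exact h.2.2 h.1

/-- Threshold graphs (with explicit vertex set): built from the empty graph
by repeatedly adding isolated or dominating vertices. -/
inductive IsThreshold : SimpleGraph α → Finset α → Prop
  | empty : IsThreshold ⊥ ∅
  | isolated {G V v} (hv : v ∉ V) (h : IsThreshold G V) : IsThreshold G (insert v V)
  | dominating {G V v} (hv : v ∉ V) (h : IsThreshold G V) :
      IsThreshold (addDom G V v) (insert v V)

/-- Clique-width expressions over label type `L` and vertex type `α`. -/
inductive CWExpr (L α : Type*) where
  | vertex : L → α → CWExpr L α
  | union : CWExpr L α → CWExpr L α → CWExpr L α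
  | connect : L → L → CWExpr L α → CWExpr L α
  | relabel : L → L → CWExpr L α → CWExpr L α

/-- The graph of all edges between label `i` and label `j` within `V` under labelling `f`. -/
def connGraph {L : Type*} [DecidableEq L] (V : Finset α) (f : α → L) (i j : L) :
    SimpleGraph α where
  Adj a b := a ≠ b ∧ a ∈ V ∧ b ∈ V ∧ ((f a = i ∧ f b = j) ∨ (f a = j ∧ f b = i))
  symm := by
    constructor
    intro a b h
    rcases h.2.2.2 with h4 | h4
    · exact ⟨h.1.symm, h.2.2.1, h.2.1, Or.inr ⟨h4.2, h4.1⟩⟩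
    · exact ⟨h.1.symm, h.2.2.1, h.2.1, Or.inl ⟨h4.2, h4.1⟩⟩
  loopless := by
    constructor
    intro a h
    exact h.1 rfl

/-- `Builds e V f G`: the clique-width expression `e` builds the labelled graph
with vertex set `V`, labelling `f` and edge structure `G`. -/
inductive Builds {L : Type*} [DecidableEq L] : CWExpr L α → Finset α → (α → L) → SimpleGraph α → Prop
  | vertex (l : L) (v : α) : Builds (.vertex l v) {v} (fun _ => l) ⊥
  | union {e₁ e₂ V₁ V₂ f₁ f₂ G₁ G₂} (h₁ : Builds e₁ V₁ f₁ G₁) (h₂ : Builds e₂ V₂ f₂ G₂)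
      (hd : _root_.Disjoint V₁ V₂) :
      Builds (.union e₁ e₂) (V₁ ∪ V₂) (fun x => if x ∈ V₁ then f₁ x else f₂ x) (G₁ ⊔ G₂)
  | connect {e V f G} (i j : L) (hij : i ≠ j) (h : Builds e V f G) :
      Builds (.connect i j e) V f (G ⊔ connGraph V f i j)
  | relabel {e V f G} (i j : L) (h : Builds e V f G) :
      Builds (.relabel i j e) V (fun x => if f x = i then j else f x) G

/-- The clique-width of `G` (with vertex set `V`) is at most `k`. -/
def CliqueWidthLE (k : ℕ) (G : SimpleGraph α) (V : Finset α) : Prop :=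
  ∃ (e : CWExpr (Fin k) α) (f : α → Fin k), Builds e V f G

/-- The crown graph `H_{n,n}`: complete bipartite minus a perfect matching. -/
def crown (n : ℕ) : SimpleGraph (Fin n ⊕ Fin n) where
  Adj a b :=
    match a, b with
    | .inl x, .inr y => x ≠ y
    | .inr x, .inl y => x ≠ y
    | _, _ => False
  symm := by
    constructor
    intro a b h
    cases a <;> cases b <;> simp_all
    · exact fun hc => h hc.symm
    · exact fun hc => h hc.symm
  loopless := by
    constructor
    intro a h
    cases a <;> simp_all

/-- The disjoint-union-of-cliques graph associated with a partition `P` of `[n]`. -/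
def partGraph {n : ℕ} (P : Finpartition (Finset.univ : Finset (Fin n))) :
    SimpleGraph (Fin n) where
  Adj x y := x ≠ y ∧ ∃ C ∈ P.parts, x ∈ C ∧ y ∈ C
  symm := by
    constructor
    intro a b h
    obtain ⟨hne, C, hC, h1, h2⟩ := h
    exact ⟨hne.symm, C, hC, h2, h1⟩
  loopless := by
    constructor
    intro a h
    exact h.1 rfl

/-- The word associated with a partition: each block written twice in a row. -/
noncomputable def partWord {n : ℕ} (P : Finpartition (Finset.univ : Finset (Fin n))) : List (Fin n) :=
  (P.parts.toList.map (fun C => C.toList ++ C.toList)).flatten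


/-- Auxiliary recursive block counter with a "previous bit" parameter. -/
def bcAux : Bool → List Bool → ℕ
  | _, [] => 0
  | prev, b :: l => (if b && !prev then 1 else 0) + bcAux b l

lemma blockCount_eq_bcAux' (l : List Bool) : ∀ prev : Bool,
    ((l.zip (prev :: l)).filter (fun p => p.1 && !p.2)).length = bcAux prev l := by
  induction l with
  | nil => intro prev; simp [bcAux]
  | cons b t ih =>
      intro prev
      simp only [List.zip_cons_cons, List.filter_cons, bcAux]
      split <;> simp [ih b] <;> omega

lemma blockCount_eq_bcAux (l : List Bool) : blockCount l = bcAux false l :=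
  blockCount_eq_bcAux' l false

lemma bcAux_true_le_false (l : List Bool) : bcAux true l ≤ bcAux false l := by
  cases l with
  | nil => simp [bcAux]
  | cons b t => cases b <;> simp [bcAux] <;> omega

lemma bcAux_false_le (l : List Bool) : bcAux false l ≤ bcAux true l + 1 := by
  cases l with
  | nil => simp [bcAux]
  | cons b t => cases b <;> simp [bcAux] <;> omega

lemma bcAux_sublist {l₁ l₂ : List Bool} (h : l₁ <+ l₂) :
    ∀ prev, bcAux prev l₁ ≤ bcAux prev l₂ := by
  induction h with
  | slnil => intro prev; exact le_refl _
  | @cons m₁ m₂ b h ih =>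
      intro prev
      simp only [bcAux]
      cases b with
      | false =>
          cases prev with
          | false => simpa using ih false
          | true => simpa using le_trans (ih true) (bcAux_true_le_false m₂)
      | true =>
          cases prev with
          | true => simpa using ih true
          | false =>
              have h1 := ih false
              have h2 := bcAux_false_le m₂
              simp only [Bool.not_false, Bool.and_true, if_pos]
              omega
  | @cons_cons m₁ m₂ b h ih =>
      intro prev
      simp only [bcAux]
      exact Nat.add_le_add_left (ih b) _

lemma blockCount_sublist {l₁ l₂ : List Bool} (h : l₁ <+ l₂) :
    blockCount l₁ ≤ blockCount l₂ := by
  rw [blockCount_eq_bcAux, blockCount_eq_bcAux]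
  exact bcAux_sublist h false

lemma filter_take_exists (p : α → Bool) (l : List α) :
    ∀ i : ℕ, ∃ j : ℕ, (l.filter p).take i = (l.take j).filter p := by
  induction l with
  | nil => intro i; exact ⟨0, by simp⟩
  | cons a t ih =>
      intro i
      by_cases hp : p a
      · cases i with
        | zero => exact ⟨0, by simp⟩
        | succ i' =>
            obtain ⟨j, hj⟩ := ih i'
            exact ⟨j + 1, by simp [List.filter_cons, hp, hj]⟩
      · obtain ⟨j, hj⟩ := ih i
        refine ⟨j + 1, ?_⟩
        simp [List.filter_cons, hp, hj]

/-- Graphs representable by `k`-local words are hereditary: the projection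
`π_U(w)` of a `k`-local word `w` is `k`-local and represents the induced subgraph. -/
theorem stmt4 {α : Type*} [DecidableEq α] (k : ℕ) (w : List α) (V : Finset α)
    (G : SimpleGraph α) (hw : KLocal k w) (h : Represents w V G)
    (U : Finset α) (hU : U ⊆ V) :
    KLocal k (w.filter (fun x => decide (x ∈ U))) ∧
      Represents (w.filter (fun x => decide (x ∈ U))) U (inducedOn G U) := by
  set p : α → Bool := fun x => decide (x ∈ U) with hp
  set w' : List α := w.filter p with hw'
  obtain ⟨σ, hσnd, hσfs, hσbc⟩ := hw
  obtain ⟨hwfs, hadj⟩ := h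
  have hmemU : ∀ x ∈ w', x ∈ U := by
    intro x hx
    have := List.of_mem_filter hx
    simpa [hp] using this
  -- key: for a, b ∈ U, filtering w' by {a,b} equals filtering w by {a,b}
  have key : ∀ a b : α, a ∈ U → b ∈ U →
      w'.filter (fun x => decide (x = a ∨ x = b)) =
      w.filter (fun x => decide (x = a ∨ x = b)) := by
    intro a b ha hb
    rw [hw', List.filter_filter]
    apply List.filter_congr
    intro x hx
    by_cases hab : x = a ∨ x = b
    · have hxU : x ∈ U := by rcases hab with rfl | rfl <;> assumption
      simp [hp, hab, hxU]
    · simp [hab]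
  have hws' : w'.toFinset = U := by
    ext x
    simp only [hw', List.toFinset_filter, Finset.mem_filter, hwfs, hp, decide_eq_true_eq]
    constructor
    · rintro ⟨_, hx⟩; exact hx
    · intro hx; exact ⟨hU hx, hx⟩
  constructor
  · -- KLocal
    refine ⟨σ.filter p, hσnd.filter p, ?_, ?_⟩
    · rw [List.toFinset_filter, List.toFinset_filter, hσfs]
    · intro i
      obtain ⟨j, hj⟩ := filter_take_exists p σ i
      have hmapeq : w'.map (fun x => decide (x ∈ (σ.filter p).take i)) =
          w'.map (fun x => decide (x ∈ σ.take j)) := by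
        apply List.map_congr_left
        intro x hx
        have hxU : x ∈ U := hmemU x hx
        rw [hj]
        simp [List.mem_filter, hp, hxU]
      rw [hmapeq]
      have hsub : w'.map (fun x => decide (x ∈ σ.take j)) <+
          w.map (fun x => decide (x ∈ σ.take j)) :=
        (List.filter_sublist (l := w)).map _
      exact le_trans (blockCount_sublist hsub) (hσbc j)
  · -- Represents
    refine ⟨hws', ?_⟩
    intro a b
    constructor
    · rintro ⟨hGab, haU, hbU⟩
      obtain ⟨hne, haw, hbw, hchain⟩ := (hadj a b).mp hGab
      refine ⟨hne, ?_, ?_, ?_⟩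
      · rw [hw', List.mem_filter]; exact ⟨haw, by simp [hp, haU]⟩
      · rw [hw', List.mem_filter]; exact ⟨hbw, by simp [hp, hbU]⟩
      · rw [key a b haU hbU]; exact hchain
    · rintro ⟨hne, haw', hbw', hchain⟩
      have haU : a ∈ U := hmemU a haw'
      have hbU : b ∈ U := hmemU b hbw'
      refine ⟨(hadj a b).mpr ⟨hne, ?_, ?_, ?_⟩, haU, hbU⟩
      · exact List.mem_of_mem_filter haw'
      · exact List.mem_of_mem_filter hbw'
      · rw [← key a b haU hbU]; exact hchain
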